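/- Let n, r, d, m be natural numbers with 2 ≤ d and d+1 ≤ m ≤ n. Suppose H_1, …, H_r are proper subsets of {1,…,n} that are pairwise distinct with pairwise intersections of size at most d−2. Let A_{m−1} be the number of (m−1)-element subsets of {1,…,n} contained in some H_j and A_m the number of m-element subsets contained in some H_j. Then A_{m−1} ≤ C(n, m) − A_m. -/

import Mathlib

theorem stmt_2 (n r d m : ℕ) (hd : 2 ≤ d) (hm1 : d + 1 ≤ m) (hm2 : m ≤ n)
    (H : Fin r → Finset ℕ) (hprop : ∀ j, H j ⊂ Finset.range n)
    (hpair : ∀ j1 j2 : Fin r, j1 ≠ j2 →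
      H j1 ≠ H j2 ∧ (H j1 ∩ H j2).card ≤ d - 2) :
    (((Finset.range n).powersetCard (m - 1)).filter
        (fun S => ∃ j : Fin r, S ⊆ H j)).card ≤
    n.choose m -
      (((Finset.range n).powersetCard m).filter
        (fun S => ∃ j : Fin r, S ⊆ H j)).card := by
  classical
  have hne : ∀ j : Fin r, (Finset.range n \ H j).Nonempty := by
    intro j
    obtain ⟨x, hx1, hx2⟩ := Finset.exists_of_ssubset (hprop j)
    exact ⟨x, Finset.mem_sdiff.mpr ⟨hx1, hx2⟩⟩
  set f : Finset ℕ → Finset ℕ := fun S =>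
    if h : ∃ j : Fin r, S ⊆ H j then
      insert ((Finset.range n \ H h.choose).min' (hne h.choose)) S
    else S with hf
  set B := ((Finset.range n).powersetCard m).filter
      (fun S => ¬ ∃ j : Fin r, S ⊆ H j) with hB
  have hcard : B.card = n.choose m -
      (((Finset.range n).powersetCard m).filter
        (fun S => ∃ j : Fin r, S ⊆ H j)).card := by
    rw [hB, Finset.filter_not, Finset.card_sdiff_of_subset (Finset.filter_subset _ _),
      Finset.card_powersetCard, Finset.card_range]
  rw [← hcard]
  apply Finset.card_le_card_of_injOn f
  · -- maps into B
    intro S hS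
    rw [Finset.mem_coe, Finset.mem_filter, Finset.mem_powersetCard] at hS
    obtain ⟨⟨hSsub, hScard⟩, h⟩ := hS
    have hj := h.choose_spec
    set j0 := h.choose
    set u := (Finset.range n \ H j0).min' (hne j0) with hu
    have humem : u ∈ Finset.range n \ H j0 := Finset.min'_mem _ _
    rw [Finset.mem_sdiff] at humem
    have huS : u ∉ S := fun hx => humem.2 (hj hx)
    have hfS : f S = insert u S := by simp only [hf, dif_pos h]; rfl
    rw [Finset.mem_coe, hB, Finset.mem_filter, Finset.mem_powersetCard, hfS]
    refine ⟨⟨Finset.insert_subset humem.1 hSsub, ?_⟩, ?_⟩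
    · rw [Finset.card_insert_of_notMem huS, hScard]; omega
    · rintro ⟨k, hk⟩
      have hSk : S ⊆ H k := fun x hx => hk (Finset.mem_insert_of_mem hx)
      have huk : u ∈ H k := hk (Finset.mem_insert_self _ _)
      by_cases hjk : k = j0
      · exact humem.2 (hjk ▸ huk)
      · have hint : S ⊆ H j0 ∩ H k := fun x hx =>
          Finset.mem_inter.mpr ⟨hj hx, hSk hx⟩
        have := Finset.card_le_card hint
        have := (hpair j0 k (fun e => hjk e.symm)).2
        omega
  · -- injective on the source
    intro S hS T hT hfST
    rw [Finset.mem_coe, Finset.mem_filter, Finset.mem_powersetCard] at hS hT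
    obtain ⟨⟨hSsub, hScard⟩, hexS⟩ := hS
    obtain ⟨⟨hTsub, hTcard⟩, hexT⟩ := hT
    have hjS := hexS.choose_spec
    have hjT := hexT.choose_spec
    set j := hexS.choose
    set k := hexT.choose
    set u := (Finset.range n \ H j).min' (hne j) with hu
    set v := (Finset.range n \ H k).min' (hne k) with hv
    have humem : u ∈ Finset.range n \ H j := Finset.min'_mem _ _
    have hvmem : v ∈ Finset.range n \ H k := Finset.min'_mem _ _
    rw [Finset.mem_sdiff] at humem hvmem
    have huS : u ∉ S := fun hx => humem.2 (hjS hx)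
    have hvT : v ∉ T := fun hx => hvmem.2 (hjT hx)
    have heq : insert u S = insert v T := by
      have h1 : f S = insert u S := by simp only [hf, dif_pos hexS]; rfl
      have h2 : f T = insert v T := by simp only [hf, dif_pos hexT]; rfl
      rw [← h1, ← h2, hfST]
    by_contra hST
    have huv : u ≠ v := by
      intro h
      rw [h] at heq huS
      exact hST (by rw [← Finset.erase_insert huS, heq, Finset.erase_insert hvT])
    have huT : u ∈ T := by
      have : u ∈ insert v T := heq ▸ Finset.mem_insert_self u S
      rcases Finset.mem_insert.mp this with h | h
      · exact absurd h huv
      · exact h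
    have hvS : v ∈ S := by
      have : v ∈ insert u S := heq ▸ Finset.mem_insert_self v T
      rcases Finset.mem_insert.mp this with h | h
      · exact absurd h huv.symm
      · exact h
    have hjk : j ≠ k := by
      intro h
      exact humem.2 (h ▸ hjT huT)
    -- S \ T ⊆ {v}
    have hsd : S \ T ⊆ {v} := by
      intro x hx
      rw [Finset.mem_sdiff] at hx
      have : x ∈ insert v T := heq ▸ Finset.mem_insert_of_mem hx.1
      rcases Finset.mem_insert.mp this with h | h
      · simpa using h
      · exact absurd h hx.2
    have h1 : (S \ T).card ≤ 1 := le_trans (Finset.card_le_card hsd) (by simp)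
    have h2 : (S ∩ T).card + (S \ T).card = S.card :=
      Finset.card_inter_add_card_sdiff S T
    have hintsub : S ∩ T ⊆ H j ∩ H k := fun x hx => by
      rw [Finset.mem_inter] at hx ⊢
      exact ⟨hjS hx.1, hjT hx.2⟩
    have h3 := Finset.card_le_card hintsub
    have h4 := (hpair j k hjk).2
    omega
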